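/- Assume F(D) ≠ ∅. Then the closure of H in the weak topology σ(Z × ℝ, W × ℝ) equals N. -/

import Mathlib

open Set Filter

lemma weak_repr {E F : Type*} [AddCommGroup E] [Module ℝ E] [AddCommGroup F] [Module ℝ F]
    (B : E →ₗ[ℝ] F →ₗ[ℝ] ℝ) (f : WeakBilin B →L[ℝ] ℝ) :
    ∃ y : F, ∀ x : E, f x = B x y := by
  have h0 : f ⁻¹' Set.Ioo (-1 : ℝ) 1 ∈ nhds (0 : WeakBilin B) := by
    apply f.continuous.continuousAt.preimage_mem_nhds
    rw [map_zero]
    exact Ioo_mem_nhds (by norm_num) (by norm_num)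
  obtain ⟨U, hU, hUsub⟩ := (LinearMap.hasBasis_weakBilin B).mem_iff.mp h0
  obtain ⟨s, ε, hε, rfl⟩ := (SeminormFamily.basisSets_iff _).mp hU
  have hker : ∀ x : E, (∀ y ∈ s, B x y = 0) → f x = 0 := by
    intro x hx
    by_contra hfx
    have hmem : ((2 / f x) • x : WeakBilin B) ∈
        Seminorm.ball (s.sup B.toSeminormFamily) 0 ε := by
      rw [Seminorm.mem_ball_zero]
      refine Seminorm.finset_sup_apply_lt hε fun i hi => ?_
      have hz : B ((2 / f x) • x) i = 0 := by rw [map_smul]; simp [hx i hi]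
      show ‖B ((2 / f x) • x) i‖ < ε
      rw [hz]
      simpa using hε
    have h2 : f ((2 / f x) • (x : WeakBilin B)) ∈ Ioo (-1 : ℝ) 1 := hUsub hmem
    simp only [Set.mem_Ioo, map_smul, smul_eq_mul] at h2
    have h3 : f ((2 / f x) • x) = 2 / f x * f x := map_smul f (2 / f x) x
    rw [h3, div_mul_cancel₀ _ hfx] at h2
    linarith [h2.2]
  have hker' : ⨅ i : {y // y ∈ s}, LinearMap.ker
        ((B.flip (i : F) : E →ₗ[ℝ] ℝ) : WeakBilin B →ₗ[ℝ] ℝ) ≤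
      LinearMap.ker (f : WeakBilin B →ₗ[ℝ] ℝ) := by
    intro x hx
    simp only [Submodule.mem_iInf, LinearMap.mem_ker, LinearMap.flip_apply] at hx
    exact (LinearMap.mem_ker (M := WeakBilin B)).mpr (hker x fun y hy => hx ⟨y, hy⟩)
  have hspan := mem_span_of_iInf_ker_le_ker hker'
  obtain ⟨cc, hcc⟩ := (Submodule.mem_span_range_iff_exists_fun ℝ).mp hspan
  refine ⟨∑ i : {y // y ∈ s}, cc i • (i : F), fun x => ?_⟩
  have hx := congrArg (fun g : WeakBilin B →ₗ[ℝ] ℝ => g x) hcc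
  simp only [LinearMap.coe_sum, Finset.sum_apply, LinearMap.smul_apply,
    LinearMap.flip_apply, smul_eq_mul, ContinuousLinearMap.coe_coe] at hx
  rw [map_sum]
  simp only [map_smul, smul_eq_mul]
  rw [← hx]
  exact (LinearMap.sum_apply Finset.univ (fun i : {y // y ∈ s} =>
    cc i • ((B.flip (i : F) : E →ₗ[ℝ] ℝ) : WeakBilin B →ₗ[ℝ] ℝ)) x).trans (Finset.sum_congr rfl fun i _ => rfl)

noncomputable def pairB {Z W : Type*} [AddCommGroup Z] [Module ℝ Z] [AddCommGroup W] [Module ℝ W]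
    (pZ : Z →ₗ[ℝ] W →ₗ[ℝ] ℝ) : (Z × ℝ) →ₗ[ℝ] (W × ℝ) →ₗ[ℝ] ℝ :=
  LinearMap.mk₂ ℝ (fun p q => pZ p.1 q.1 + p.2 * q.2)
    (fun p p' q => by
      simp only [Prod.fst_add, Prod.snd_add, map_add, LinearMap.add_apply]; ring)
    (fun c p q => by
      simp only [Prod.smul_fst, Prod.smul_snd, map_smul, LinearMap.smul_apply, smul_eq_mul]; ring)
    (fun p q q' => by
      simp only [Prod.fst_add, Prod.snd_add, map_add]; ring)
    (fun c p q => by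
      simp only [Prod.smul_fst, Prod.smul_snd, map_smul, smul_eq_mul]; ring)

theorem closure_H_eq_N
    {X Y Z W : Type*} [AddCommGroup X] [Module ℝ X] [AddCommGroup Y] [Module ℝ Y]
    [AddCommGroup Z] [Module ℝ Z] [AddCommGroup W] [Module ℝ W]
    (pX : X →ₗ[ℝ] Y →ₗ[ℝ] ℝ) (pZ : Z →ₗ[ℝ] W →ₗ[ℝ] ℝ)
    (A : X →ₗ[ℝ] Z) (Astar : W →ₗ[ℝ] Y)
    (hadj : ∀ (x : X) (w : W), pX x (Astar w) = pZ (A x) w)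
    (P : Set X) (Q : Set Z)
    (hPne : P.Nonempty)
    (hPcone : ∀ s t : ℝ, 0 ≤ s → 0 ≤ t → ∀ u ∈ P, ∀ v ∈ P, s • u + t • v ∈ P)
    (hQne : Q.Nonempty)
    (hQcone : ∀ s t : ℝ, 0 ≤ s → 0 ≤ t → ∀ u ∈ Q, ∀ v ∈ Q, s • u + t • v ∈ Q)
    (b : Z) (c : Y)
    (Pstar : Set Y) (hPstar : Pstar = {y : Y | ∀ x ∈ P, 0 ≤ pX x y})
    (Qstar : Set W) (hQstar : Qstar = {w : W | ∀ z ∈ Q, 0 ≤ pZ z w})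
    (FP : Set X) (hFP : FP = {x ∈ P | A x - b ∈ Q})
    (FD : Set W) (hFD : FD = {w ∈ Qstar | c - Astar w ∈ Pstar})
    (hXsep : ∀ x : X, (∀ y : Y, pX x y = 0) → x = 0)
    (hYsep : ∀ y : Y, (∀ x : X, pX x y = 0) → y = 0)
    (hZsep : ∀ z : Z, (∀ w : W, pZ z w = 0) → z = 0)
    (hWsep : ∀ w : W, (∀ z : Z, pZ z w = 0) → w = 0)
    (Hset : Set (Z × ℝ))
    (hH : Hset = {p : Z × ℝ | ∃ x ∈ P, ∃ q ∈ Q, p.1 = A x - b - q ∧ pX x c ≤ p.2})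
    (Nset : Set (Z × ℝ))
    (hN : Nset = {p : Z × ℝ | ∀ w ∈ FD, pZ (b + p.1) w ≤ p.2})
    (hFDne : FD.Nonempty) :
    @closure (Z × ℝ)
      (TopologicalSpace.induced
        (fun p : Z × ℝ => (fun q : W × ℝ => pZ p.1 q.1 + p.2 * q.2))
        Pi.topologicalSpace) Hset = Nset := by
  classical
  have hbM : ∀ (p : Z × ℝ) (q : W × ℝ), pairB pZ p q = pZ p.1 q.1 + p.2 * q.2 := fun _ _ => rfl
  have zeroP : (0 : X) ∈ P := by
    obtain ⟨u, hu⟩ := hPne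
    simpa using hPcone 0 0 le_rfl le_rfl u hu u hu
  have zeroQ : (0 : Z) ∈ Q := by
    obtain ⟨u, hu⟩ := hQne
    simpa using hQcone 0 0 le_rfl le_rfl u hu u hu
  have smulP : ∀ (t : ℝ), 0 ≤ t → ∀ x ∈ P, t • x ∈ P := by
    intro t ht x hx
    simpa using hPcone t 0 ht le_rfl x hx x hx
  have smulQ : ∀ (t : ℝ), 0 ≤ t → ∀ q ∈ Q, t • q ∈ Q := by
    intro t ht x hx
    simpa using hQcone t 0 ht le_rfl x hx x hx
  -- H ⊆ N
  have hHN : Hset ⊆ Nset := by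
    rw [hH, hN]
    rintro ⟨z, r⟩ ⟨x, hx, q, hq, h1, h2⟩
    intro w hw
    rw [hFD] at hw
    obtain ⟨hw1, hw2⟩ := hw
    rw [hQstar] at hw1
    rw [hPstar] at hw2
    have hq' := hw1 q hq
    have hx' := hw2 x hx
    simp only [map_sub] at hx'
    have hadj' := hadj x w
    simp only at h1 h2 ⊢
    rw [h1]
    simp only [map_add, map_sub, LinearMap.add_apply, LinearMap.sub_apply]
    linarith
  -- N is weakly closed
  have hNclosed : @IsClosed (WeakBilin (pairB pZ)) _ Nset := by
    have hNeq : Nset = ⋂ w ∈ FD,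
        (fun p : WeakBilin (pairB pZ) => pairB pZ p (w, (-1 : ℝ))) ⁻¹' Iic (-(pZ b w)) := by
      rw [hN]
      ext p
      simp only [Set.mem_setOf_eq]
      erw [Set.mem_iInter₂]
      change (∀ w ∈ FD, pZ (b + p.1) w ≤ p.2) ↔ ∀ w ∈ FD, pZ p.1 w + p.2 * (-1) ≤ -(pZ b w)
      constructor
      · intro h w hw
        have h' := h w hw
        rw [map_add, LinearMap.add_apply] at h'
        linarith
      · intro h w hw
        have h' := h w hw
        rw [map_add, LinearMap.add_apply]
        linarith
    rw [hNeq]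
    exact isClosed_biInter fun w _ =>
      IsClosed.preimage (WeakBilin.eval_continuous (pairB pZ) (w, -1)) isClosed_Iic
  -- H is convex
  have hconv : Convex ℝ (Hset : Set (Z × ℝ)) := by
    rw [hH]
    rintro p ⟨x₁, hx₁, q₁, hq₁, e₁, r₁⟩ p' ⟨x₂, hx₂, q₂, hq₂, e₂, r₂⟩ θ σ hθ hσ hθσ
    refine ⟨θ • x₁ + σ • x₂, hPcone θ σ hθ hσ _ hx₁ _ hx₂,
      θ • q₁ + σ • q₂, hQcone θ σ hθ hσ _ hq₁ _ hq₂, ?_, ?_⟩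
    · show (θ • p + σ • p').1 = _
      simp only [Prod.fst_add, Prod.smul_fst]
      rw [e₁, e₂, map_add, map_smul, map_smul]
      have hb2 : θ • (A x₁ - b - q₁) + σ • (A x₂ - b - q₂)
          = θ • A x₁ + σ • A x₂ - (θ + σ) • b - (θ • q₁ + σ • q₂) := by module
      rw [hb2, hθσ, one_smul]
    · show pX _ c ≤ (θ • p + σ • p').2
      simp only [Prod.snd_add, Prod.smul_snd, smul_eq_mul]
      rw [map_add, LinearMap.add_apply, map_smul, map_smul, LinearMap.smul_apply,
        LinearMap.smul_apply, smul_eq_mul, smul_eq_mul]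
      have g1 := mul_le_mul_of_nonneg_left r₁ hθ
      have g2 := mul_le_mul_of_nonneg_left r₂ hσ
      linarith
  have key : @closure (WeakBilin (pairB pZ)) _ Hset = Nset := by
    apply Set.Subset.antisymm
    · exact closure_minimal hHN hNclosed
    · intro p₀ hp₀
      rw [hN] at hp₀
      by_contra hpc
      have hconv' : Convex ℝ (@closure (WeakBilin (pairB pZ)) _ Hset) :=
        Convex.closure hconv
      obtain ⟨f, u, hfa, hfp⟩ := geometric_hahn_banach_closed_point hconv' isClosed_closure hpc
      obtain ⟨yw, hrep⟩ := weak_repr (pairB pZ) f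
      obtain ⟨w, β⟩ := yw
      have hsep : ∀ x ∈ P, ∀ q ∈ Q, ∀ r : ℝ, pX x c ≤ r →
          pZ (A x) w - pZ b w - pZ q w + r * β < u := by
        intro x hx q hq r hr
        have hmem : ((A x - b - q, r) : Z × ℝ) ∈ Hset := by
          rw [hH]; exact ⟨x, hx, q, hq, rfl, hr⟩
        have hlt := hfa _ (subset_closure hmem)
        rw [hrep, hbM] at hlt
        simp only [map_sub, LinearMap.sub_apply] at hlt
        exact hlt
      have hu0 : -pZ b w < u := by
        have h := hsep 0 zeroP 0 zeroQ 0 (by simp)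
        simpa using h
      have hβ : β ≤ 0 := by
        by_contra hβ'
        push_neg at hβ'
        set t := max 0 ((u + pZ b w + 1) / β) with ht
        have h1 := hsep 0 zeroP 0 zeroQ t
          (by simp only [map_zero, LinearMap.zero_apply]; exact le_max_left _ _)
        simp only [map_zero, LinearMap.zero_apply, zero_sub, sub_zero] at h1
        have h2 : (u + pZ b w + 1) / β * β ≤ t * β :=
          mul_le_mul_of_nonneg_right (le_max_right _ _) hβ'.le
        rw [div_mul_cancel₀ _ (ne_of_gt hβ')] at h2
        linarith
      have hwQ : ∀ q ∈ Q, 0 ≤ pZ q w := by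
        intro q hq
        by_contra hq'
        push_neg at hq'
        have hpos : 0 < -pZ q w := by linarith
        set t := max 0 ((u + pZ b w + 1) / (-pZ q w)) with ht
        have h1 := hsep 0 zeroP (t • q) (smulQ t (le_max_left _ _) q hq) 0
          (by simp only [map_zero, LinearMap.zero_apply]; exact le_rfl)
        simp only [map_zero, LinearMap.zero_apply, map_smul, LinearMap.smul_apply,
          smul_eq_mul, zero_mul, zero_sub, add_zero] at h1
        have h2 : (u + pZ b w + 1) / (-pZ q w) * (-pZ q w) ≤ t * (-pZ q w) :=
          mul_le_mul_of_nonneg_right (le_max_right _ _) hpos.le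
        rw [div_mul_cancel₀ _ (ne_of_gt hpos)] at h2
        nlinarith
      have hxle : ∀ x ∈ P, pZ (A x) w + pX x c * β ≤ 0 := by
        intro x hx
        by_contra hx'
        push_neg at hx'
        set s := pZ (A x) w + pX x c * β with hs
        set t := max 0 ((u + pZ b w + 1) / s) with ht
        have h1 := hsep (t • x) (smulP t (le_max_left _ _) x hx) 0 zeroQ (t * pX x c)
          (by rw [map_smul, LinearMap.smul_apply, smul_eq_mul])
        simp only [map_zero, LinearMap.zero_apply, map_smul, LinearMap.smul_apply,
          smul_eq_mul, sub_zero] at h1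
        have h2 : (u + pZ b w + 1) / s * s ≤ t * s :=
          mul_le_mul_of_nonneg_right (le_max_right _ _) hx'.le
        rw [div_mul_cancel₀ _ (ne_of_gt hx')] at h2
        rw [hs] at h2
        nlinarith
      have hpt : u < pZ p₀.1 w + p₀.2 * β := by
        have h := hfp
        exact (h.trans_eq (hrep p₀)).trans_eq (hbM p₀ (w, β))
      have hstar : 0 < pZ b w + pZ p₀.1 w + p₀.2 * β := by linarith
      rcases hβ.lt_or_eq with hβlt | hβ0
      · have hnb : 0 < -β := by linarith
        have hw'FD : (-β)⁻¹ • w ∈ FD := by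
          rw [hFD]
          refine ⟨?_, ?_⟩
          · rw [hQstar]
            intro z hz
            rw [map_smul, smul_eq_mul]
            exact mul_nonneg (inv_nonneg.mpr hnb.le) (hwQ z hz)
          · rw [hPstar]
            intro x hx
            have h := hxle x hx
            have h' : pZ (A x) w ≤ pX x c * (-β) := by nlinarith
            have h2 := mul_le_mul_of_nonneg_left h' (inv_nonneg.mpr hnb.le)
            have h3 : (-β)⁻¹ * (pX x c * (-β)) = pX x c := by
              rw [mul_comm, mul_assoc, mul_inv_cancel₀ (ne_of_gt hnb), mul_one]
            rw [map_sub, map_smul, map_smul, smul_eq_mul, hadj]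
            linarith
        have hfin := hp₀ _ hw'FD
        rw [map_smul, smul_eq_mul] at hfin
        have h4 := mul_le_mul_of_nonneg_left hfin hnb.le
        have h5 : -β * ((-β)⁻¹ * pZ (b + p₀.1) w) = pZ (b + p₀.1) w := by
          rw [← mul_assoc, mul_inv_cancel₀ (ne_of_gt hnb), one_mul]
        rw [h5] at h4
        rw [map_add, LinearMap.add_apply] at h4
        nlinarith
      · subst hβ0
        obtain ⟨w₀, hw₀⟩ := hFDne
        rw [hFD] at hw₀
        obtain ⟨hw₀1, hw₀2⟩ := hw₀
        rw [hQstar] at hw₀1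
        rw [hPstar] at hw₀2
        have hKpos : 0 < pZ (b + p₀.1) w := by
          rw [map_add, LinearMap.add_apply]
          nlinarith
        set t := max 0 ((p₀.2 - pZ (b + p₀.1) w₀ + 1) / pZ (b + p₀.1) w) with ht
        have htn : (0 : ℝ) ≤ t := le_max_left _ _
        have hmemFD : w₀ + t • w ∈ FD := by
          rw [hFD]
          refine ⟨?_, ?_⟩
          · rw [hQstar]
            intro z hz
            have g1 := hw₀1 z hz
            have g2 := hwQ z hz
            rw [map_add, map_smul, smul_eq_mul]
            have : 0 ≤ t * pZ z w := mul_nonneg htn g2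
            linarith
          · rw [hPstar]
            intro x hx
            have g1 := hw₀2 x hx
            have g2 := hxle x hx
            simp only [map_add, map_sub, map_smul, smul_eq_mul, hadj,
              LinearMap.add_apply, LinearMap.sub_apply] at g1 g2 ⊢
            have g3 : t * pZ (A x) w ≤ 0 :=
              mul_nonpos_of_nonneg_of_nonpos htn (by nlinarith)
            linarith
        have hfin := hp₀ _ hmemFD
        rw [map_add, map_smul, smul_eq_mul] at hfin
        have h2 : (p₀.2 - pZ (b + p₀.1) w₀ + 1) / pZ (b + p₀.1) w * pZ (b + p₀.1) w
            ≤ t * pZ (b + p₀.1) w :=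
          mul_le_mul_of_nonneg_right (le_max_right _ _) hKpos.le
        rw [div_mul_cancel₀ _ (ne_of_gt hKpos)] at h2
        linarith
  exact key
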